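/- Let ω be a radial weight with ω̂ doubling and 0 < q < ∞. Define a_k = (ω̂(1-2^{-k})/ω̂(1-2^{-(k+1)}))^{1/q} for k ≥ 1. Then there is a constant C₁ = C₁(q,ω) with 1 < a_k ≤ C₁ for all k, and the infinite product f(z) = ∏_{k=1}^∞ (1 + a_k z^{2^k})/(1 + a_k^{-1} z^{2^k}) defines an analytic function on 𝔻 satisfying M_∞(r,f) ≤ C·(ω̂(r))^{-1/q} for all 0 < r < 1. -/

import Mathlib

open MeasureTheory Set

/-- The tail integral `ω̂(r) = ∫_r^1 ω(s) ds` of a radial weight. -/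
noncomputable def omegaHat (ω : ℝ → ℝ) (r : ℝ) : ℝ := ∫ s in Ico r 1, ω s

/-- The sequence `a_k = (ω̂(1-2^{-k}) / ω̂(1-2^{-(k+1)}))^{1/q}`. -/
noncomputable def aSeq (ω : ℝ → ℝ) (q : ℝ) (k : ℕ) : ℝ :=
  (omegaHat ω (1 - 2 ^ (-(k : ℝ))) / omegaHat ω (1 - 2 ^ (-((k : ℝ) + 1)))) ^ (1 / q)

open Filter Topology

private lemma norm_prod_one_add_sub_one_le (s : Finset ℕ) (u : ℕ → ℂ) :
    ‖(∏ k ∈ s, (1 + u k)) - 1‖ ≤ (∏ k ∈ s, (1 + ‖u k‖)) - 1 := by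
  classical
  induction s using Finset.induction_on with
  | empty => simp
  | @insert a t ha ih =>
    have h1 : (1:ℝ) ≤ ∏ k ∈ t, (1 + ‖u k‖) :=
      by
        have := Finset.prod_le_prod (s := t) (f := fun _ => (1:ℝ))
          (g := fun k => 1 + ‖u k‖) (by intros; norm_num)
          (by intro k _; show (1:ℝ) ≤ 1 + ‖u k‖; linarith [norm_nonneg (u k)])
        simpa using this
    rw [Finset.prod_insert ha, Finset.prod_insert ha]
    have e : (1 + u a) * ∏ k ∈ t, (1 + u k) - 1
        = (1 + u a) * ((∏ k ∈ t, (1 + u k)) - 1) + u a := by ring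
    rw [e]
    calc ‖(1 + u a) * ((∏ k ∈ t, (1 + u k)) - 1) + u a‖
        ≤ ‖1 + u a‖ * ‖(∏ k ∈ t, (1 + u k)) - 1‖ + ‖u a‖ :=
          (norm_add_le _ _).trans (by rw [norm_mul])
      _ ≤ (1 + ‖u a‖) * ((∏ k ∈ t, (1 + ‖u k‖)) - 1) + ‖u a‖ := by
          have hb : ‖(1:ℂ) + u a‖ ≤ 1 + ‖u a‖ := (norm_add_le _ _).trans (by simp)
          have h2 := norm_nonneg (u a)
          nlinarith [norm_nonneg ((∏ k ∈ t, (1 + u k)) - 1)]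
      _ = (1 + ‖u a‖) * (∏ k ∈ t, (1 + ‖u k‖)) - 1 := by ring

private lemma prod_one_add_le_exp (s : Finset ℕ) (x : ℕ → ℝ) (hx : ∀ k ∈ s, 0 ≤ x k) :
    ∏ k ∈ s, (1 + x k) ≤ Real.exp (∑ k ∈ s, x k) := by
  rw [Real.exp_sum]
  exact Finset.prod_le_prod (fun k hk => by have := hx k hk; linarith)
    (fun k hk => by linarith [Real.add_one_le_exp (x k)])

private lemma mobius_norm_le (a : ℝ) (ha : 1 ≤ a) (w : ℂ) (hw : ‖w‖ ≤ 1) :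
    ‖1 + (a:ℂ) * w‖ * (1 + a⁻¹ * ‖w‖) ≤ (1 + a * ‖w‖) * ‖1 + ((a⁻¹ : ℝ):ℂ) * w‖ := by
  have ha0 : (0:ℝ) < a := lt_of_lt_of_le one_pos ha
  set b : ℝ := a⁻¹ with hb
  have hab : a * b = 1 := mul_inv_cancel₀ ha0.ne'
  have hb0 : 0 ≤ b := (inv_nonneg).2 ha0.le
  have hba : b ≤ a := by
    rw [hb]
    calc a⁻¹ ≤ 1 := inv_le_one_of_one_le₀ ha
    _ ≤ a := ha
  set t : ℝ := ‖w‖ with htdef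
  set x : ℝ := w.re with hxdef
  set y : ℝ := w.im with hydef
  have ht0 : 0 ≤ t := norm_nonneg w
  have hxt : x ≤ t := le_trans (le_abs_self _)
    (Complex.abs_re_le_norm w)
  have hxy : x ^ 2 + y ^ 2 = t ^ 2 := by
    rw [htdef, Complex.sq_norm, Complex.normSq_apply]
    ring
  have hy2 : y ^ 2 = t ^ 2 - x ^ 2 := by linarith
  have hnum : ‖1 + (a:ℂ) * w‖ ^ 2 = 1 + 2*a*x + a^2*t^2 := by
    rw [Complex.sq_norm, Complex.normSq_apply]
    simp only [Complex.add_re, Complex.add_im, Complex.mul_re, Complex.mul_im,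
      Complex.one_re, Complex.one_im, Complex.ofReal_re, Complex.ofReal_im]
    linear_combination (a^2) * hy2
  have hden : ‖1 + ((b : ℝ):ℂ) * w‖ ^ 2 = 1 + 2*b*x + b^2*t^2 := by
    rw [Complex.sq_norm, Complex.normSq_apply]
    simp only [Complex.add_re, Complex.add_im, Complex.mul_re, Complex.mul_im,
      Complex.one_re, Complex.one_im, Complex.ofReal_re, Complex.ofReal_im]
    linear_combination (b^2) * hy2
  have hsq : (‖1 + (a:ℂ) * w‖ * (1 + b * t)) ^ 2 ≤ ((1 + a * t) * ‖1 + ((b : ℝ):ℂ) * w‖) ^ 2 := by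
    rw [mul_pow, mul_pow, hnum, hden]
    have key : (1 + a*t)^2*(1 + 2*b*x + b^2*t^2) - (1 + 2*a*x + a^2*t^2)*(1 + b*t)^2
        = 2*(t - x)*(a - b)*(1 - a*b*t^2) := by ring
    rw [hab] at key
    nlinarith [mul_nonneg (mul_nonneg (sub_nonneg.2 hxt) (sub_nonneg.2 hba))
      (by nlinarith : (0:ℝ) ≤ 1 - 1*t^2)]
  have h1 : 0 ≤ ‖1 + (a:ℂ) * w‖ * (1 + b * t) := by positivity
  have h2 : 0 ≤ (1 + a * t) * ‖1 + ((b : ℝ):ℂ) * w‖ := by positivity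
  exact (pow_le_pow_iff_left₀ h1 h2 (by norm_num)).1 hsq

private lemma one_add_norm_lower (b : ℝ) (hb0 : 0 ≤ b) (hb1 : b ≤ 1) (w : ℂ) (hw : ‖w‖ ≤ 1) :
    1 - ‖w‖ ≤ ‖1 + (b:ℂ) * w‖ := by
  have hbw : ‖(b:ℂ) * w‖ ≤ ‖w‖ := by
    rw [norm_mul, Complex.norm_real, Real.norm_eq_abs, abs_of_nonneg hb0]
    nlinarith [norm_nonneg w]
  have h1 : (1:ℝ) ≤ ‖1 + (b:ℂ)*w‖ + ‖(b:ℂ)*w‖ := by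
    have := norm_add_le (1 + (b:ℂ)*w) (-((b:ℂ)*w))
    simpa using this
  linarith

private lemma factor_norm_le (a : ℝ) (ha : 1 ≤ a) (w : ℂ) (hw : ‖w‖ < 1) :
    ‖(1 + (a:ℂ) * w) / (1 + ((a⁻¹:ℝ):ℂ) * w)‖ ≤ (1 + a * ‖w‖) / (1 + a⁻¹ * ‖w‖) := by
  have ha0 : (0:ℝ) < a := lt_of_lt_of_le one_pos ha
  have hb0 : (0:ℝ) ≤ a⁻¹ := by positivity
  have hb1 : a⁻¹ ≤ 1 := inv_le_one_of_one_le₀ ha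
  have hpos : 0 < ‖1 + ((a⁻¹:ℝ):ℂ) * w‖ :=
    lt_of_lt_of_le (by linarith) (one_add_norm_lower a⁻¹ hb0 hb1 w hw.le)
  have hpos2 : (0:ℝ) < 1 + a⁻¹ * ‖w‖ := by positivity
  rw [norm_div]
  rw [div_le_div_iff₀ hpos hpos2]
  exact mobius_norm_le a ha w hw.le

private lemma ratio_le_a (a t : ℝ) (ha : 1 ≤ a) (ht0 : 0 ≤ t) (ht1 : t ≤ 1) :
    (1 + a * t) / (1 + a⁻¹ * t) ≤ a := by
  have ha0 : (0:ℝ) < a := lt_of_lt_of_le one_pos ha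
  have hd : (0:ℝ) < 1 + a⁻¹ * t := by positivity
  rw [div_le_iff₀ hd]
  have he : a * (1 + a⁻¹ * t) = a + t := by field_simp
  rw [he]; nlinarith

private lemma ratio_le_one_add (a t : ℝ) (h0 : 0 ≤ a) (ht0 : 0 ≤ t) :
    (1 + a*t)/(1 + a⁻¹*t) ≤ 1 + a*t :=
  div_le_self (by positivity) (le_add_of_nonneg_right (by positivity))

private lemma factor_sub_one (a b : ℝ) (w : ℂ) (h : (1:ℂ) + (b:ℂ)*w ≠ 0) :
    (1 + (a:ℂ)*w)/(1 + (b:ℂ)*w) - 1 = (((a:ℂ) - b)*w) / (1 + (b:ℂ)*w) := by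
  rw [div_sub_one h]
  ring

private lemma sum_Ioc_half_pow (N n : ℕ) :
    ∑ k ∈ Finset.Ioc N n, ((1:ℝ)/2)^(k - N) ≤ 1 := by
  have aux : ∀ j : ℕ, ∑ k ∈ Finset.Ioc N (N + j), ((1:ℝ)/2)^(k - N) = 1 - (1/2)^j := by
    intro j
    induction j with
    | zero => simp
    | succ j ih =>
      have h1 : N ≤ N + j := Nat.le_add_right N j
      rw [show N + (j+1) = (N + j) + 1 by omega, Finset.sum_Ioc_succ_top h1, ih]
      have h2 : N + j + 1 - N = j + 1 := by omega
      rw [h2, pow_succ]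
      ring
  rcases le_total n N with h | h
  · rw [Finset.Ioc_eq_empty (by omega)]
    simp
  · obtain ⟨j, rfl⟩ := Nat.exists_eq_add_of_le h
    rw [aux j]
    have : (0:ℝ) ≤ (1/2)^j := by positivity
    linarith

private lemma pow_le_exp_bound {r : ℝ} (hr0 : 0 ≤ r) {N k : ℕ} (hk : N < k)
    (hr : r ≤ 1 - (1/2:ℝ)^(N+1)) : r^(2^k) ≤ (1/2:ℝ)^(k - N) := by
  obtain ⟨j, rfl⟩ := Nat.exists_eq_add_of_le hk
  have hre : r ≤ Real.exp (-(1/2:ℝ)^(N+1)) := by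
    have := Real.add_one_le_exp (-(1/2:ℝ)^(N+1))
    linarith
  have step1 : r^(2^(N+1+j)) ≤ Real.exp (-(1/2:ℝ)^(N+1)) ^ (2^(N+1+j)) :=
    pow_le_pow_left₀ hr0 hre _
  have step2 : Real.exp (-(1/2:ℝ)^(N+1)) ^ (2^(N+1+j)) = Real.exp (-(2:ℝ)^j) := by
    rw [← Real.exp_nat_mul]
    congr 1
    have h5 : ((2:ℝ)^(N+1+j)) * (1/2)^(N+1) = 2^j := by
      rw [pow_add, one_div, inv_pow]
      field_simp
    push_cast
    linear_combination -h5
  have step3 : Real.exp (-(2:ℝ)^j) ≤ (1/2:ℝ)^(j+1) := by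
    set m : ℝ := (2:ℝ)^j with hm
    have hm1 : (1:ℝ) ≤ m := one_le_pow₀ (by norm_num)
    have hkey : (2:ℝ)^(j+1) ≤ Real.exp m := by
      have h1 : (1:ℝ) + m/2 ≤ Real.exp (m/2) := by linarith [Real.add_one_le_exp (m/2)]
      have h2 : Real.exp m = Real.exp (m/2) * Real.exp (m/2) := by
        rw [← Real.exp_add]; ring_nf
      have h3 : (1 + m/2)*(1+m/2) ≤ Real.exp (m/2) * Real.exp (m/2) :=
        mul_le_mul h1 h1 (by linarith) (le_trans (by linarith) h1)
      have h4 : (2:ℝ)^(j+1) = 2*m := by rw [pow_succ]; ring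
      nlinarith [sq_nonneg (m/2 - 1)]
    rw [Real.exp_neg, one_div, inv_pow]
    exact inv_anti₀ (by positivity) hkey
  have hNk : N + 1 + j - N = j + 1 := by omega
  calc r^(2^(N+1+j)) ≤ Real.exp (-(2:ℝ)^j) := step2 ▸ step1
    _ ≤ (1/2:ℝ)^(j+1) := step3
    _ = (1/2:ℝ)^(N+1+j-N) := by rw [hNk]

section OmegaHatFacts
variable {ω : ℝ → ℝ}

private lemma omegaHat_nonneg (hωpos : ∀ r : ℝ, 0 ≤ r → r < 1 → 0 < ω r)
    {r : ℝ} (hr : 0 ≤ r) : 0 ≤ omegaHat ω r := by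
  apply setIntegral_nonneg measurableSet_Ico
  intro s hs
  exact (hωpos s (le_trans hr hs.1) hs.2).le

private lemma integrableOn_piece (hωint : IntegrableOn ω (Ico (0:ℝ) 1)) {r r' : ℝ}
    (hr : 0 ≤ r) (h1 : r' ≤ 1) : IntegrableOn ω (Ico r r') :=
  hωint.mono_set (fun x hx => ⟨le_trans hr hx.1, lt_of_lt_of_le hx.2 h1⟩)

private lemma omegaHat_mono (hωpos : ∀ r : ℝ, 0 ≤ r → r < 1 → 0 < ω r)
    (hωint : IntegrableOn ω (Ico (0:ℝ) 1)) {r r' : ℝ} (hr : 0 ≤ r) (hrr' : r ≤ r') :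
    omegaHat ω r' ≤ omegaHat ω r := by
  rcases le_or_gt 1 r' with h | h
  · have he : Ico r' (1:ℝ) = ∅ := Ico_eq_empty (by linarith)
    rw [omegaHat, he]
    simpa using omegaHat_nonneg hωpos hr
  · rw [omegaHat, omegaHat]
    apply setIntegral_mono_set (integrableOn_piece hωint hr le_rfl)
    · exact (ae_restrict_iff' measurableSet_Ico).2
        (ae_of_all _ fun s hs => (hωpos s (le_trans hr hs.1) hs.2).le)
    · exact HasSubset.Subset.eventuallyLE (Ico_subset_Ico_left hrr')

private lemma integral_pos_piece (hωpos : ∀ r : ℝ, 0 ≤ r → r < 1 → 0 < ω r)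
    (hωint : IntegrableOn ω (Ico (0:ℝ) 1)) {r r' : ℝ} (h0 : 0 ≤ r) (hlt : r < r')
    (h2 : r' ≤ 1) : 0 < ∫ s in Ico r r', ω s := by
  rw [setIntegral_pos_iff_support_of_nonneg_ae]
  · have hsub : Ico r r' ⊆ Function.support ω ∩ Ico r r' := fun x hx =>
      ⟨(hωpos x (le_trans h0 hx.1) (lt_of_lt_of_le hx.2 h2)).ne', hx⟩
    refine lt_of_lt_of_le ?_ (measure_mono hsub)
    rw [Real.volume_Ico]
    exact ENNReal.ofReal_pos.2 (by linarith)
  · exact (ae_restrict_iff' measurableSet_Ico).2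
      (ae_of_all _ fun x hx => (hωpos x (le_trans h0 hx.1) (lt_of_lt_of_le hx.2 h2)).le)
  · exact integrableOn_piece hωint h0 h2

private lemma omegaHat_pos (hωpos : ∀ r : ℝ, 0 ≤ r → r < 1 → 0 < ω r)
    (hωint : IntegrableOn ω (Ico (0:ℝ) 1)) {r : ℝ} (h0 : 0 ≤ r) (h1 : r < 1) :
    0 < omegaHat ω r :=
  integral_pos_piece hωpos hωint h0 h1 le_rfl

private lemma omegaHat_split (hωint : IntegrableOn ω (Ico (0:ℝ) 1)) {r r' : ℝ}
    (h0 : 0 ≤ r) (h1 : r ≤ r') (h2 : r' ≤ 1) :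
    omegaHat ω r = (∫ s in Ico r r', ω s) + omegaHat ω r' := by
  rw [omegaHat, omegaHat, ← setIntegral_union (Ico_disjoint_Ico_same)
    measurableSet_Ico (integrableOn_piece hωint h0 h2)
    (integrableOn_piece hωint (le_trans h0 h1) le_rfl), Ico_union_Ico_eq_Ico h1 h2]

private lemma omegaHat_lt (hωpos : ∀ r : ℝ, 0 ≤ r → r < 1 → 0 < ω r)
    (hωint : IntegrableOn ω (Ico (0:ℝ) 1)) {r r' : ℝ} (h0 : 0 ≤ r) (hlt : r < r')
    (h1 : r' < 1) : omegaHat ω r' < omegaHat ω r := by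
  rw [omegaHat_split hωint h0 hlt.le h1.le]
  linarith [integral_pos_piece hωpos hωint h0 hlt h1.le]

end OmegaHatFacts

private lemma prod_div_telescope (g : ℕ → ℝ) (hg : ∀ k, 0 < g k) (M : ℕ) :
    ∏ k ∈ Finset.Icc 1 M, (g k / g (k+1)) = g 1 / g (M+1) := by
  induction M with
  | zero => simp [div_self (hg 1).ne']
  | succ M ih =>
    rw [Finset.prod_Icc_succ_top (Nat.succ_le_succ (Nat.zero_le M)), ih]
    field_simp
    rw [mul_comm (g 1), mul_div_mul_left _ _ (hg (M+1)).ne']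

set_option maxHeartbeats 2000000 in
theorem stmt_17 (q : ℝ) (hq : 0 < q) (ω : ℝ → ℝ)
    (hωpos : ∀ r : ℝ, 0 ≤ r → r < 1 → 0 < ω r)
    (hωint : IntegrableOn ω (Ico (0 : ℝ) 1))
    (C₀ : ℝ) (hC₀ : 1 ≤ C₀)
    (hdoub : ∀ r : ℝ, 0 ≤ r → r < 1 → omegaHat ω r ≤ C₀ * omegaHat ω ((1 + r) / 2)) :
    (∃ C₁ : ℝ, ∀ k : ℕ, 1 ≤ k → 1 < aSeq ω q k ∧ aSeq ω q k ≤ C₁) ∧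
    ∃ f : ℂ → ℂ, AnalyticOnNhd ℂ f (Metric.ball (0 : ℂ) 1) ∧
      (∀ z ∈ Metric.ball (0 : ℂ) 1,
        Filter.Tendsto
          (fun n : ℕ => ∏ k ∈ Finset.Icc 1 n,
            (1 + (aSeq ω q k : ℂ) * z ^ (2 ^ k)) / (1 + ((aSeq ω q k : ℝ)⁻¹ : ℂ) * z ^ (2 ^ k)))
          Filter.atTop (nhds (f z))) ∧
      ∃ C : ℝ, 0 < C ∧ ∀ z ∈ Metric.ball (0 : ℂ) 1,
        ‖f z‖ ≤ C * (omegaHat ω ‖z‖) ^ (-(1 / q)) := by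
  classical
  have hq' : (0:ℝ) < 1/q := by positivity
  set a : ℕ → ℝ := aSeq ω q with ha_def
  set pt : ℕ → ℝ := fun k => 1 - (1/2:ℝ)^k with hpt_def
  have hpt0 : ∀ k : ℕ, 0 ≤ pt k := fun k => by
    have : (1/2:ℝ)^k ≤ 1 := pow_le_one₀ (by norm_num) (by norm_num)
    simp only [hpt_def]; linarith
  have hpt1 : ∀ k : ℕ, pt k < 1 := fun k => by
    have : (0:ℝ) < (1/2)^k := by positivity
    simp only [hpt_def]; linarith
  have hptmono : ∀ {j k : ℕ}, j ≤ k → pt j ≤ pt k := fun {j k} h => by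
    simp only [hpt_def]
    have := pow_le_pow_of_le_one (by norm_num : (0:ℝ) ≤ 1/2) (by norm_num) h
    linarith
  set G : ℕ → ℝ := fun k => omegaHat ω (pt k) with hG_def
  have hg : ∀ k : ℕ, 0 < G k := fun k => omegaHat_pos hωpos hωint (hpt0 k) (hpt1 k)
  have hconv : ∀ k : ℕ, (2:ℝ) ^ (-(k:ℝ)) = (1/2:ℝ)^k := by
    intro k
    rw [Real.rpow_neg (by norm_num), Real.rpow_natCast, one_div, inv_pow]
  have haSeq : ∀ k : ℕ, a k = (G k / G (k+1)) ^ (1/q) := by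
    intro k
    have e1 : (2:ℝ) ^ (-((k:ℝ)+1)) = (1/2:ℝ)^(k+1) := by
      have e2 : -((k:ℝ)+1) = -(((k+1:ℕ)):ℝ) := by push_cast; ring
      rw [e2, hconv (k+1)]
    simp only [ha_def, aSeq, hG_def, hpt_def, hconv k, e1]
  have hpt_succ : ∀ k : ℕ, (1 + pt k)/2 = pt (k+1) := by
    intro k
    simp only [hpt_def]; rw [pow_succ]; ring
  have hratio : ∀ k : ℕ, 1 < G k / G (k+1) ∧ G k / G (k+1) ≤ C₀ := by
    intro k
    constructor
    · rw [lt_div_iff₀ (hg (k+1)), one_mul]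
      refine omegaHat_lt hωpos hωint (hpt0 k) ?_ (hpt1 (k+1))
      simp only [hpt_def]
      have : (1/2:ℝ)^(k+1) < (1/2)^k :=
        pow_lt_pow_right_of_lt_one₀ (by norm_num) (by norm_num) (Nat.lt_succ_self k)
      linarith
    · rw [div_le_iff₀ (hg (k+1))]
      have hd := hdoub (pt k) (hpt0 k) (hpt1 k)
      rw [hpt_succ k] at hd
      simpa [hG_def] using hd
  have haLb : ∀ k : ℕ, 1 < a k := fun k => by
    rw [haSeq k]
    exact (Real.one_lt_rpow_iff_of_pos (div_pos (hg k) (hg (k+1)))).2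
      (Or.inl ⟨(hratio k).1, hq'⟩)
  have haUb : ∀ k : ℕ, a k ≤ C₀ ^ (1/q) := fun k => by
    rw [haSeq k]
    exact Real.rpow_le_rpow (div_pos (hg k) (hg (k+1))).le (hratio k).2 hq'.le
  set C₁ : ℝ := C₀ ^ (1/q) with hC₁def
  have hC₁1 : (1:ℝ) ≤ C₁ := by
    have h := Real.rpow_le_rpow zero_le_one hC₀ hq'.le
    rwa [Real.one_rpow] at h
  -- the product functions
  set g : ℕ → ℂ → ℂ := fun k z =>
    (1 + (a k : ℂ) * z ^ (2 ^ k)) / (1 + ((a k : ℝ)⁻¹ : ℂ) * z ^ (2 ^ k)) with hgdef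
  set F : ℕ → ℂ → ℂ := fun n z => ∏ k ∈ Finset.Icc 1 n, g k z with hFdef
  set f : ℂ → ℂ := fun z => limUnder atTop (fun n => F n z) with hfdef
  have hwlt : ∀ (z : ℂ), ‖z‖ < 1 → ∀ k : ℕ, ‖z ^ (2^k)‖ < 1 := by
    intro z hz k
    rw [norm_pow]
    exact pow_lt_one₀ (norm_nonneg z) hz (by positivity)
  have hden_ne : ∀ (k : ℕ) (z : ℂ), ‖z‖ < 1 →
      (1 : ℂ) + ((a k : ℝ)⁻¹ : ℂ) * z ^ (2^k) ≠ 0 := by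
    intro k z hz
    have hw := hwlt z hz k
    have hlow := one_add_norm_lower (a k)⁻¹
      (inv_nonneg.2 (by linarith [haLb k]))
      (inv_le_one_of_one_le₀ (haLb k).le) _ hw.le
    rw [Complex.ofReal_inv] at hlow
    intro h
    rw [h, norm_zero] at hlow
    linarith
  have hu_bound : ∀ (ρ : ℝ), 0 ≤ ρ → ρ < 1 → ∀ (k : ℕ) (z : ℂ), ‖z‖ ≤ ρ →
      ‖g k z - 1‖ ≤ C₁ * ρ^k / (1 - ρ) := by
    intro ρ hρ0 hρ1 k z hz
    have hz1 : ‖z‖ < 1 := lt_of_le_of_lt hz hρ1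
    have hwk : ‖z ^ (2^k)‖ ≤ ρ^k := by
      rw [norm_pow]
      calc ‖z‖^(2^k) ≤ ρ^(2^k) := pow_le_pow_left₀ (norm_nonneg z) hz _
        _ ≤ ρ^k := pow_le_pow_of_le_one hρ0 hρ1.le (Nat.lt_two_pow_self).le
    have hne := hden_ne k z hz1
    rw [← Complex.ofReal_inv] at hne
    have heq : g k z - 1 = ((((a k):ℂ) - (((a k)⁻¹:ℝ):ℂ)) * z^(2^k)) / (1 + (((a k)⁻¹:ℝ):ℂ) * z^(2^k)) := by
      simp only [hgdef, ← Complex.ofReal_inv]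
      exact factor_sub_one (a k) (a k)⁻¹ (z^(2^k)) hne
    rw [heq, norm_div, norm_mul]
    have hainv : (0:ℝ) ≤ (a k)⁻¹ := inv_nonneg.2 (lt_of_lt_of_le one_pos (haLb k).le).le
    have hnum1 : ‖(a k : ℂ) - (((a k)⁻¹:ℝ):ℂ)‖ ≤ C₁ := by
      rw [← Complex.ofReal_sub, Complex.norm_real, Real.norm_eq_abs,
        abs_of_nonneg (by linarith [haLb k, inv_le_one_of_one_le₀ (haLb k).le] : (0:ℝ) ≤ a k - (a k)⁻¹)]
      linarith [haUb k, hainv]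
    have hden1 : 1 - ρ ≤ ‖1 + (((a k)⁻¹:ℝ):ℂ) * z^(2^k)‖ := by
      have h1 := one_add_norm_lower (a k)⁻¹ (by positivity)
        (inv_le_one_of_one_le₀ (haLb k).le) (z^(2^k)) (hwlt z hz1 k).le
      have h2 : ‖z^(2^k)‖ ≤ ρ := by
        rw [norm_pow]
        calc ‖z‖^(2^k) ≤ ρ^(2^k) := pow_le_pow_left₀ (norm_nonneg z) hz _
          _ ≤ ρ^1 := pow_le_pow_of_le_one hρ0 hρ1.le Nat.one_le_two_pow
          _ = ρ := pow_one ρ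
      linarith
    refine div_le_div₀ (mul_nonneg (by linarith) (by positivity))
      (mul_le_mul hnum1 hwk (norm_nonneg _) (by linarith)) (by linarith) hden1
  have hIcc : ∀ n : ℕ, Finset.Icc 1 n = Finset.Ioc 0 n := by
    intro n; ext x; simp; omega
  -- uniform Cauchy on closed balls
  have hUC : ∀ ρ : ℝ, 0 ≤ ρ → ρ < 1 → UniformCauchySeqOn F atTop (Metric.closedBall 0 ρ) := by
    intro ρ hρ0 hρ1
    set c : ℕ → ℝ := fun k => C₁ * ρ^k / (1 - ρ) with hcdef
    have hc0 : ∀ k, 0 ≤ c k := fun k =>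
      div_nonneg (mul_nonneg (by linarith) (by positivity)) (by linarith)
    have hcsum : Summable c := ((summable_geometric_of_lt_one hρ0 hρ1).mul_left _).div_const _
    set A : ℝ := ∑' k, c k with hAdef
    set S : ℕ → ℝ := fun m => ∑ k ∈ Finset.Ioc 0 m, c k with hSdef
    have hSle : ∀ m, S m ≤ A := fun m => Summable.sum_le_tsum _ (fun k _ => hc0 k) hcsum
    have hSmono : Monotone S := fun m n hmn =>
      Finset.sum_le_sum_of_subset_of_nonneg (Finset.Ioc_subset_Ioc le_rfl hmn)
        (fun k _ _ => hc0 k)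
    have hbdd : BddAbove (Set.range S) := ⟨A, by rintro x ⟨m, rfl⟩; exact hSle m⟩
    set L : ℝ := ⨆ m, S m with hLdef
    have hSL : ∀ m, S m ≤ L := fun m => le_ciSup hbdd m
    have hSconv : Tendsto S atTop (𝓝 L) := tendsto_atTop_ciSup hSmono hbdd
    have htail0 : Tendsto (fun m => Real.exp A * (Real.exp (L - S m) - 1)) atTop (𝓝 0) := by
      have h1 : Tendsto (fun m => L - S m) atTop (𝓝 0) := by
        have h := (tendsto_const_nhds (x := L) (f := (atTop : Filter ℕ))).sub hSconv
        simpa using h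
      have h2 : Tendsto (fun m => Real.exp (L - S m) - 1) atTop (𝓝 0) := by
        have h3 := (Real.continuous_exp.tendsto 0).comp h1
        have h4 := h3.sub (tendsto_const_nhds (x := (1:ℝ)))
        simpa using h4
      have h5 := h2.const_mul (Real.exp A)
      simpa using h5
    have main : ∀ m n : ℕ, m ≤ n → ∀ x ∈ Metric.closedBall (0:ℂ) ρ,
        dist (F n x) (F m x) ≤ Real.exp A * (Real.exp (L - S m) - 1) := by
      intro m n hmn x hx
      have hxρ : ‖x‖ ≤ ρ := by rwa [Metric.mem_closedBall, dist_zero_right] at hx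
      have huk : ∀ k, ‖g k x - 1‖ ≤ c k := fun k => hu_bound ρ hρ0 hρ1 k x hxρ
      have hgk : ∀ k, ‖g k x‖ ≤ 1 + c k := fun k => by
        have e : g k x = 1 + (g k x - 1) := by ring
        rw [e]
        exact (norm_add_le _ _).trans (by simpa using add_le_add_left (huk k) 1)
      have hsplit : F n x = F m x * ∏ k ∈ Finset.Ioc m n, g k x := by
        simp only [hFdef, hIcc]
        exact (Finset.prod_Ioc_consecutive (fun k => g k x) (Nat.zero_le m) hmn).symm
      rw [dist_eq_norm, hsplit]
      have e2 : F m x * ∏ k ∈ Finset.Ioc m n, g k x - F m x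
          = F m x * ((∏ k ∈ Finset.Ioc m n, g k x) - 1) := by ring
      rw [e2, norm_mul]
      have b1 : ‖F m x‖ ≤ Real.exp A := by
        calc ‖F m x‖ = ∏ k ∈ Finset.Icc 1 m, ‖g k x‖ := by
              simp only [hFdef]; exact norm_prod _ _
          _ ≤ ∏ k ∈ Finset.Icc 1 m, (1 + c k) :=
              Finset.prod_le_prod (fun k _ => norm_nonneg _) (fun k _ => hgk k)
          _ ≤ Real.exp (∑ k ∈ Finset.Icc 1 m, c k) :=
              prod_one_add_le_exp _ _ (fun k _ => hc0 k)
          _ ≤ Real.exp A := Real.exp_le_exp.2 (Summable.sum_le_tsum _ (fun k _ => hc0 k) hcsum)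
      have b2 : ‖(∏ k ∈ Finset.Ioc m n, g k x) - 1‖ ≤ Real.exp (L - S m) - 1 := by
        have e3 : ∏ k ∈ Finset.Ioc m n, g k x = ∏ k ∈ Finset.Ioc m n, (1 + (g k x - 1)) :=
          Finset.prod_congr rfl (fun k _ => by ring)
        rw [e3]
        refine (norm_prod_one_add_sub_one_le _ _).trans ?_
        have b3 : ∏ k ∈ Finset.Ioc m n, (1 + ‖g k x - 1‖)
            ≤ Real.exp (∑ k ∈ Finset.Ioc m n, c k) := by
          refine le_trans (Finset.prod_le_prod (fun k _ => by positivity)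
            (fun k _ => add_le_add_right (huk k) 1)) ?_
          exact prod_one_add_le_exp _ _ (fun k _ => hc0 k)
        have b4 : ∑ k ∈ Finset.Ioc m n, c k ≤ L - S m := by
          have hcons := Finset.sum_Ioc_consecutive (fun k => c k) (Nat.zero_le m) hmn
          have hSn : S m + ∑ k ∈ Finset.Ioc m n, c k = S n := by
            simpa [hSdef] using hcons
          have := hSL n
          linarith
        have := Real.exp_le_exp.2 b4
        linarith [b3]
      exact mul_le_mul b1 b2 (norm_nonneg _) (Real.exp_pos A).le
    rw [Metric.uniformCauchySeqOn_iff]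
    intro ε hε
    obtain ⟨m₀, hm₀⟩ := Filter.eventually_atTop.1 (htail0.eventually (gt_mem_nhds hε))
    refine ⟨m₀, fun m hm n hn x hx => ?_⟩
    rcases le_total m n with h | h
    · calc dist (F m x) (F n x) = dist (F n x) (F m x) := dist_comm _ _
        _ ≤ Real.exp A * (Real.exp (L - S m) - 1) := main m n h x hx
        _ < ε := hm₀ m hm
    · calc dist (F m x) (F n x) ≤ Real.exp A * (Real.exp (L - S n) - 1) := main n m h x hx
        _ < ε := hm₀ n hn
  have htend : ∀ z : ℂ, ‖z‖ < 1 → Tendsto (fun n => F n z) atTop (𝓝 (f z)) := by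
    intro z hz
    have hcs : CauchySeq (fun n => F n z) :=
      (hUC ‖z‖ (norm_nonneg z) hz).cauchySeq (mem_closedBall_zero_iff.2 le_rfl)
    exact hcs.tendsto_limUnder
  have hFdiff : ∀ n : ℕ, DifferentiableOn ℂ (F n) (Metric.ball (0:ℂ) 1) := by
    intro n
    have key : ∀ s : Finset ℕ,
        DifferentiableOn ℂ (fun z => ∏ k ∈ s, g k z) (Metric.ball (0:ℂ) 1) := by
      intro s
      induction s using Finset.induction_on with
      | empty => simpa using differentiableOn_const (1:ℂ)
      | @insert kk t hkk ih =>
        have hgk : DifferentiableOn ℂ (g kk) (Metric.ball (0:ℂ) 1) := by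
          simp only [hgdef]
          apply DifferentiableOn.div
          · exact Differentiable.differentiableOn (by fun_prop)
          · exact Differentiable.differentiableOn (by fun_prop)
          · intro z hz
            exact hden_ne kk z (mem_ball_zero_iff.1 hz)

        have := hgk.mul ih
        simp only [Finset.prod_insert hkk]
        exact this
    exact key _
  have hdiff : DifferentiableOn ℂ f (Metric.ball (0:ℂ) 1) := by
    intro z hz
    have hz1 : ‖z‖ < 1 := mem_ball_zero_iff.1 hz
    set ρ : ℝ := (‖z‖ + 1)/2 with hρ
    have hρ0 : 0 ≤ ρ := by positivity
    have hρ1 : ρ < 1 := by simp only [hρ]; linarith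
    have hzρ : ‖z‖ < ρ := by simp only [hρ]; linarith
    have hTU : TendstoUniformlyOn F f atTop (Metric.closedBall 0 ρ) :=
      (hUC ρ hρ0 hρ1).tendstoUniformlyOn_of_tendsto
        (fun x hx => htend x (lt_of_le_of_lt (mem_closedBall_zero_iff.1 hx) hρ1))
    have hTLU : TendstoLocallyUniformlyOn F f atTop (Metric.ball 0 ρ) :=
      hTU.tendstoLocallyUniformlyOn.mono Metric.ball_subset_closedBall
    have hfd : DifferentiableOn ℂ f (Metric.ball 0 ρ) :=
      hTLU.differentiableOn (Filter.Eventually.of_forall (fun n =>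
        (hFdiff n).mono (Metric.ball_subset_ball hρ1.le))) Metric.isOpen_ball
    exact (hfd.differentiableAt
      (Metric.isOpen_ball.mem_nhds (mem_ball_zero_iff.2 hzρ))).differentiableWithinAt
  -- choice of N
  have hNex : ∀ r : ℝ, 0 ≤ r → r < 1 → ∃ N : ℕ, pt N ≤ r ∧ r < pt (N+1) := by
    intro r h0 h1
    have hex : ∃ m : ℕ, r < pt (m+1) := by
      obtain ⟨m, hm⟩ := exists_pow_lt_of_lt_one (by linarith : (0:ℝ) < 1 - r)
        (by norm_num : (1/2:ℝ) < 1)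
      refine ⟨m, ?_⟩
      have h2 : (1/2:ℝ)^(m+1) ≤ (1/2:ℝ)^m :=
        pow_le_pow_of_le_one (by norm_num) (by norm_num) (Nat.le_succ m)
      simp only [hpt_def]
      linarith
    refine ⟨Nat.find hex, ?_, Nat.find_spec hex⟩
    rcases Nat.eq_zero_or_pos (Nat.find hex) with h | h
    · rw [h]; simpa [hpt_def] using h0
    · have hlt : Nat.find hex - 1 < Nat.find hex := Nat.sub_lt h one_pos
      have hmin := Nat.find_min hex hlt
      rw [Nat.sub_add_cancel h] at hmin
      exact not_lt.1 hmin
  have hω0 : 0 < omegaHat ω 0 := omegaHat_pos hωpos hωint le_rfl one_pos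
  -- head estimate
  have hhead : ∀ r : ℝ, 0 ≤ r → r < 1 → ∀ N : ℕ, pt N ≤ r → ∀ M : ℕ, M ≤ N →
      ∏ k ∈ Finset.Icc 1 M, a k ≤ (C₀ * omegaHat ω 0 / omegaHat ω r)^(1/q) := by
    intro r h0 h1 N hNr M hMN
    have hωr : 0 < omegaHat ω r := omegaHat_pos hωpos hωint h0 h1
    have htel : ∏ k ∈ Finset.Icc 1 M, a k = (G 1 / G (M+1))^(1/q) := by
      rw [Finset.prod_congr rfl (fun k _ => haSeq k),
        Real.finset_prod_rpow _ _ (fun k _ => le_of_lt (div_pos (hg k) (hg (k+1)))) _,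
        prod_div_telescope G hg M]
    rw [htel]
    refine Real.rpow_le_rpow (div_pos (hg 1) (hg (M+1))).le ?_ hq'.le
    have h1' : G 1 ≤ omegaHat ω 0 := omegaHat_mono hωpos hωint le_rfl (hpt0 1)
    have h2' : omegaHat ω r ≤ C₀ * G (M+1) := by
      rcases eq_or_lt_of_le hMN with rfl | hlt
      · have hd := hdoub (pt M) (hpt0 M) (hpt1 M)
        rw [hpt_succ M] at hd
        exact le_trans (omegaHat_mono hωpos hωint (hpt0 M) hNr) hd
      · have hple : pt (M+1) ≤ pt N := hptmono (by omega)
        have hGr : omegaHat ω r ≤ G (M+1) :=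
          omegaHat_mono hωpos hωint (hpt0 (M+1)) (le_trans hple hNr)
        nlinarith [hg (M+1)]
    rw [div_le_div_iff₀ (hg (M+1)) hωr]
    calc G 1 * omegaHat ω r ≤ omegaHat ω 0 * (C₀ * G (M+1)) :=
        mul_le_mul h1' h2' hωr.le hω0.le
      _ = C₀ * omegaHat ω 0 * G (M+1) := by ring
  set Cb : ℝ := Real.exp C₁ * (C₀ * omegaHat ω 0)^(1/q) with hCbdef
  have hCbpos : 0 < Cb := by
    rw [hCbdef]
    have h1 : (0:ℝ) < (C₀ * omegaHat ω 0)^(1/q) := Real.rpow_pos_of_pos (by nlinarith) _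
    positivity
  have hFb : ∀ z : ℂ, ‖z‖ < 1 → ∀ n : ℕ, ‖F n z‖ ≤ Cb * (omegaHat ω ‖z‖)^(-(1/q)) := by
    intro z hz n
    have h0 : 0 ≤ ‖z‖ := norm_nonneg z
    obtain ⟨N, hN1, hN2⟩ := hNex ‖z‖ h0 hz
    have hωr : 0 < omegaHat ω ‖z‖ := omegaHat_pos hωpos hωint h0 hz
    have hCω : (0:ℝ) ≤ C₀ * omegaHat ω 0 / omegaHat ω ‖z‖ :=
      div_nonneg (mul_nonneg (by linarith) hω0.le) hωr.le
    have htarget : Cb * (omegaHat ω ‖z‖)^(-(1/q))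
        = Real.exp C₁ * (C₀ * omegaHat ω 0 / omegaHat ω ‖z‖)^(1/q) := by
      rw [hCbdef, Real.rpow_neg hωr.le, Real.div_rpow (by nlinarith) hωr.le, div_eq_mul_inv]
      ring
    rw [htarget]
    have hfazk : ∀ k : ℕ, ‖g k z‖ ≤ a k := by
      intro k
      have hb := factor_norm_le (a k) (haLb k).le (z^(2^k)) (hwlt z hz k)
      simp only [hgdef, ← Complex.ofReal_inv]
      refine le_trans hb ?_
      rw [norm_pow]
      exact ratio_le_a (a k) (‖z‖^(2^k)) (haLb k).le (by positivity)
        (pow_le_one₀ h0 hz.le)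
    have hprodIcc : ∀ m : ℕ, ‖∏ k ∈ Finset.Icc 1 m, g k z‖ ≤ ∏ k ∈ Finset.Icc 1 m, a k := by
      intro m
      rw [norm_prod]
      exact Finset.prod_le_prod (fun k _ => norm_nonneg _) (fun k _ => hfazk k)
    have hexp1 : (1:ℝ) ≤ Real.exp C₁ := by
      rw [← Real.exp_zero]
      exact Real.exp_le_exp.2 (by linarith)
    rcases le_total n N with hn | hn
    · have hc1 : ‖F n z‖ ≤ (C₀ * omegaHat ω 0 / omegaHat ω ‖z‖)^(1/q) :=
        le_trans (hprodIcc n) (hhead ‖z‖ h0 hz N hN1 n hn)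
      nlinarith [Real.rpow_nonneg hCω (1/q), hc1]
    · have hsplit : F n z = (∏ k ∈ Finset.Icc 1 N, g k z) * ∏ k ∈ Finset.Ioc N n, g k z := by
        simp only [hFdef, hIcc]
        exact (Finset.prod_Ioc_consecutive (fun k => g k z) (Nat.zero_le N) hn).symm
      have htailf : ∀ k : ℕ, N < k → ‖g k z‖ ≤ 1 + C₁ * (1/2:ℝ)^(k-N) := by
        intro k hk
        have hb := factor_norm_le (a k) (haLb k).le (z^(2^k)) (hwlt z hz k)
        simp only [hgdef, ← Complex.ofReal_inv]
        refine le_trans hb (le_trans (ratio_le_one_add (a k) (‖z^(2^k)‖)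
          (by linarith [haLb k]) (norm_nonneg _)) ?_)
        have hr2 : ‖z^(2^k)‖ ≤ (1/2:ℝ)^(k-N) := by
          rw [norm_pow]
          refine pow_le_exp_bound h0 hk ?_
          have := hN2
          simp only [hpt_def] at this
          linarith
        have := mul_le_mul (haUb k) hr2 (norm_nonneg _) (by linarith : (0:ℝ) ≤ C₁)
        linarith
      have htailprod : ‖∏ k ∈ Finset.Ioc N n, g k z‖ ≤ Real.exp C₁ := by
        rw [norm_prod]
        calc ∏ k ∈ Finset.Ioc N n, ‖g k z‖
            ≤ ∏ k ∈ Finset.Ioc N n, (1 + C₁*(1/2:ℝ)^(k-N)) :=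
              Finset.prod_le_prod (fun k _ => norm_nonneg _)
                (fun k hk => htailf k (Finset.mem_Ioc.1 hk).1)
          _ ≤ Real.exp (∑ k ∈ Finset.Ioc N n, C₁*(1/2:ℝ)^(k-N)) :=
              prod_one_add_le_exp _ _
                (fun k _ => mul_nonneg (by linarith) (by positivity))
          _ ≤ Real.exp C₁ := by
              apply Real.exp_le_exp.2
              rw [← Finset.mul_sum]
              calc C₁ * ∑ k ∈ Finset.Ioc N n, (1/2:ℝ)^(k-N) ≤ C₁ * 1 :=
                  mul_le_mul_of_nonneg_left (sum_Ioc_half_pow N n) (by linarith)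
                _ = C₁ := mul_one C₁
      rw [hsplit, norm_mul]
      have hhd : ‖∏ k ∈ Finset.Icc 1 N, g k z‖
          ≤ (C₀ * omegaHat ω 0 / omegaHat ω ‖z‖)^(1/q) :=
        le_trans (hprodIcc N) (hhead ‖z‖ h0 hz N hN1 N le_rfl)
      calc ‖∏ k ∈ Finset.Icc 1 N, g k z‖ * ‖∏ k ∈ Finset.Ioc N n, g k z‖
          ≤ (C₀ * omegaHat ω 0 / omegaHat ω ‖z‖)^(1/q) * Real.exp C₁ :=
            mul_le_mul hhd htailprod (norm_nonneg _) (Real.rpow_nonneg hCω _)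
        _ = Real.exp C₁ * (C₀ * omegaHat ω 0 / omegaHat ω ‖z‖)^(1/q) := by ring
  refine ⟨⟨C₁, fun k _ => ⟨haLb k, haUb k⟩⟩, f,
    hdiff.analyticOnNhd Metric.isOpen_ball, ?_, Cb, hCbpos, ?_⟩
  · intro z hz
    have h := htend z (mem_ball_zero_iff.1 hz)
    have he : (fun n : ℕ => ∏ k ∈ Finset.Icc 1 n,
        (1 + (a k : ℂ) * z ^ (2 ^ k)) / (1 + ((a k : ℝ)⁻¹ : ℂ) * z ^ (2 ^ k)))
        = fun n => F n z := by
      funext n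
      simp only [hFdef, hgdef]
    rw [he]
    exact h
  · intro z hz
    have hz1 : ‖z‖ < 1 := mem_ball_zero_iff.1 hz
    exact le_of_tendsto ((htend z hz1).norm)
      (Filter.Eventually.of_forall (fun n => hFb z hz1 n))
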